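/- Let $\mathcal{A}=\{a_\alpha:\alpha<\beta\}$ be a countably infinite almost disjoint family enumerated injectively by a countable ordinal $\beta$, let $f:\beta\to\omega$ be a bijection, and let $C$ be a fin sequence. Define recursively $I_0=\omega$ and $I_{n+1}=\{i\in I_n: C(i)\cap a_{f^{-1}(n)}\neq\emptyset\}$ if this set is infinite, and otherwise $I_{n+1}=\{i\in I_n: C(i)\cap a_{f^{-1}(n)}=\emptyset\}$. Let $I=\mathrm{Pseudo}((I_n)_{n\in\omega})$. Then $I$ is infinite and for every $a\in\mathcal{A}$, either $\{i\in I:C(i)\cap a=\emptyset\}$ is finite or $\{i\in I:C(i)\cap a\neq\emptyset\}$ is finite; consequently $\{\{n\in I:a\cap C(n)\neq\emptyset\}:a\in\mathcal{A}\}\setminus[I]^{<\omega}$ is centered and each of its finite intersections is cofinite in $I$. -/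
import Mathlib


open Set

/-- An almost disjoint family on ω: an infinite set of infinite subsets of ℕ
with pairwise finite intersections. -/
def ADFamily (A : Set (Set ℕ)) : Prop :=
  A.Infinite ∧ (∀ a ∈ A, a.Infinite) ∧
    ∀ a ∈ A, ∀ b ∈ A, a ≠ b → (a ∩ b).Finite

/-- A fin sequence: pairwise disjoint nonempty finite subsets of ℕ. -/
def FinSeq (C : ℕ → Finset ℕ) : Prop :=
  (∀ n, (C n).Nonempty) ∧ ∀ n m, n ≠ m → Disjoint (C n) (C m)

/-- A collection of sets is centered iff every finite nonempty subcollection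
has infinite intersection. -/
def Centered (𝒞 : Set (Set ℕ)) : Prop :=
  ∀ F : Finset (Set ℕ), ↑F ⊆ 𝒞 → F.Nonempty → (⋂₀ (F : Set (Set ℕ))).Infinite

/-- The collection {{n ∈ I : a ∩ C(n) ≠ ∅} : a ∈ A} \ [I]^{<ω}. -/
def traceFamily (A : Set (Set ℕ)) (C : ℕ → Finset ℕ) (I : Set ℕ) : Set (Set ℕ) :=
  {S | (∃ a ∈ A, S = {n ∈ I | ((C n : Set ℕ) ∩ a).Nonempty}) ∧ S.Infinite}

/-- A is fin-intersecting. -/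
def FinIntersecting (A : Set (Set ℕ)) : Prop :=
  ∀ C : ℕ → Finset ℕ, FinSeq C →
    ∃ I : Set ℕ, I.Infinite ∧ Centered (traceFamily A C I)

/-- Maximal almost disjoint family. -/
def MADFamily (A : Set (Set ℕ)) : Prop :=
  ADFamily A ∧ ∀ X : Set ℕ, X.Infinite → ∃ a ∈ A, (X ∩ a).Infinite

/-- X ∈ I⁺(A): X is not almost covered by finitely many members of A. -/
def IPlus (A : Set (Set ℕ)) (X : Set ℕ) : Prop :=
  ∀ B : Finset (Set ℕ), ↑B ⊆ A → (X \ ⋃₀ (B : Set (Set ℕ))).Infinite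

/-- The splitting number 𝔰. -/
noncomputable def splittingNumber : Cardinal :=
  sInf {c | ∃ S : Set (Set ℕ), c = Cardinal.mk S ∧ (∀ s ∈ S, s.Infinite) ∧
    ∀ X : Set ℕ, X.Infinite → ∃ s ∈ S, (X ∩ s).Infinite ∧ (X \ s).Infinite}

/-- Pseudo(A) = {min(⋂_{k≤n} b_k \ n) : n ∈ ω}. -/
noncomputable def Pseudo (b : ℕ → Set ℕ) : Set ℕ :=
  Set.range (fun n => sInf ((⋂ k ∈ Set.Iic n, b k) ∩ {m | n ≤ m}))

theorem stmt12 (e : ℕ → Set ℕ) (he : Function.Injective e)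
    (hA : ADFamily (Set.range e)) (C : ℕ → Finset ℕ) (hC : FinSeq C)
    (I : ℕ → Set ℕ) (hI0 : I 0 = Set.univ)
    (hIrec : ∀ n,
      ({i ∈ I n | ((C i : Set ℕ) ∩ e n).Nonempty}.Infinite ∧
        I (n + 1) = {i ∈ I n | ((C i : Set ℕ) ∩ e n).Nonempty}) ∨
      (¬ {i ∈ I n | ((C i : Set ℕ) ∩ e n).Nonempty}.Infinite ∧
        I (n + 1) = {i ∈ I n | (C i : Set ℕ) ∩ e n = ∅})) :
    (Pseudo I).Infinite ∧
    (∀ n, {i ∈ Pseudo I | (C i : Set ℕ) ∩ e n = ∅}.Finite ∨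
          {i ∈ Pseudo I | ((C i : Set ℕ) ∩ e n).Nonempty}.Finite) ∧
    Centered (traceFamily (Set.range e) C (Pseudo I)) ∧
    (∀ F : Finset (Set ℕ), ↑F ⊆ traceFamily (Set.range e) C (Pseudo I) →
      (Pseudo I \ ⋂₀ (F : Set (Set ℕ))).Finite) := by
  -- I is decreasing
  have hstep : ∀ n, I (n + 1) ⊆ I n := by
    intro n
    rcases hIrec n with ⟨_, h⟩ | ⟨_, h⟩ <;> rw [h] <;> exact Set.sep_subset _ _
  have hmono : ∀ m n, n ≤ m → I m ⊆ I n := by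
    intro m n h
    induction m with
    | zero => simp_all
    | succ k ih =>
      rcases Nat.lt_or_ge n (k+1) with h' | h'
      · exact (hstep k).trans (ih (Nat.lt_succ_iff.mp h'))
      · have : n = k + 1 := le_antisymm h h'
        subst this; exact subset_rfl
  -- each I n is infinite
  have hinf : ∀ n, (I n).Infinite := by
    intro n
    induction n with
    | zero => rw [hI0]; exact Set.infinite_univ
    | succ k ih =>
      rcases hIrec k with ⟨h1, h2⟩ | ⟨h1, h2⟩
      · rwa [h2]
      · rw [h2]
        have : {i ∈ I k | (C i : Set ℕ) ∩ e k = ∅} =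
            I k \ {i ∈ I k | ((C i : Set ℕ) ∩ e k).Nonempty} := by
          ext i
          simp only [Set.mem_sep_iff, Set.mem_diff, not_and]
          constructor
          · rintro ⟨hi, hemp⟩
            exact ⟨hi, fun _ hne => hne.ne_empty hemp⟩
          · rintro ⟨hi, h⟩
            exact ⟨hi, Set.not_nonempty_iff_eq_empty.mp (h hi)⟩
        rw [this]
        exact ih.diff (Set.not_infinite.mp h1)
  -- the min function
  set g : ℕ → ℕ := fun n => sInf ((⋂ k ∈ Set.Iic n, I k) ∩ {m | n ≤ m}) with hg
  have hPseudo : Pseudo I = Set.range g := rfl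
  have hIic : ∀ n, (⋂ k ∈ Set.Iic n, I k) = I n := by
    intro n
    apply Set.Subset.antisymm
    · exact Set.biInter_subset_of_mem (Set.mem_Iic.mpr le_rfl)
    · intro x hx
      exact Set.mem_biInter fun k hk => hmono n k hk hx
  have hgmem : ∀ n, g n ∈ I n ∧ n ≤ g n := by
    intro n
    have hne : ((⋂ k ∈ Set.Iic n, I k) ∩ {m | n ≤ m}).Nonempty := by
      rw [hIic]
      rcases ((hinf n).exists_gt n) with ⟨m, hm, hnm⟩
      exact ⟨m, hm, le_of_lt hnm⟩
    exact ⟨Set.biInter_subset_of_mem (Set.mem_Iic.mpr le_rfl) (Nat.sInf_mem hne).1,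
      (Nat.sInf_mem hne).2⟩
  -- Pseudo I infinite
  have hPinf : (Pseudo I).Infinite := by
    rw [hPseudo]
    apply Set.infinite_of_not_bddAbove
    rintro ⟨b, hb⟩
    have := hb (Set.mem_range_self (b + 1))
    have := (hgmem (b + 1)).2
    omega
  -- Pseudo I is almost contained in each I m
  have halmost : ∀ m, (Pseudo I \ I m).Finite := by
    intro m
    have : Pseudo I \ I m ⊆ g '' (Set.Iio m) := by
      rintro x ⟨⟨n, rfl⟩, hx⟩
      refine ⟨n, ?_, rfl⟩
      by_contra h
      exact hx (hmono n m (Nat.le_of_not_lt (by simpa using h)) (hgmem n).1)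
    exact ((Set.finite_Iio m).image g).subset this
  -- dichotomy
  have hdich : ∀ n, {i ∈ Pseudo I | (C i : Set ℕ) ∩ e n = ∅}.Finite ∨
      {i ∈ Pseudo I | ((C i : Set ℕ) ∩ e n).Nonempty}.Finite := by
    intro n
    rcases hIrec n with ⟨h1, h2⟩ | ⟨h1, h2⟩
    · left
      apply (halmost (n + 1)).subset
      rintro i ⟨hi, hemp⟩
      refine ⟨hi, fun hin => ?_⟩
      rw [h2] at hin
      exact hin.2.ne_empty hemp
    · right
      apply (halmost (n + 1)).subset
      rintro i ⟨hi, hne⟩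
      refine ⟨hi, fun hin => ?_⟩
      rw [h2] at hin
      exact hne.ne_empty hin.2
  -- claim 4
  have h4 : ∀ F : Finset (Set ℕ), ↑F ⊆ traceFamily (Set.range e) C (Pseudo I) →
      (Pseudo I \ ⋂₀ (F : Set (Set ℕ))).Finite := by
    intro F hF
    have : Pseudo I \ ⋂₀ (F : Set (Set ℕ)) = ⋃ S ∈ (F : Set (Set ℕ)), Pseudo I \ S := by
      ext x
      simp only [Set.mem_diff, Set.mem_sInter, Set.mem_iUnion, not_forall]
      tauto
    rw [this]
    apply Set.Finite.biUnion F.finite_toSet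
    intro S hS
    obtain ⟨⟨a, ⟨m, rfl⟩, rfl⟩, hSinf⟩ := hF hS
    have hsub : Pseudo I \ {n ∈ Pseudo I | ((C n : Set ℕ) ∩ e m).Nonempty} ⊆
        {i ∈ Pseudo I | (C i : Set ℕ) ∩ e m = ∅} := by
      rintro i ⟨hi, h⟩
      refine ⟨hi, ?_⟩
      rw [Set.mem_sep_iff] at h
      push_neg at h
      exact h hi
    rcases hdich m with h | h
    · exact h.subset hsub
    · exact absurd h hSinf
  refine ⟨hPinf, hdich, ?_, h4⟩
  -- centered
  intro F hF _
  have hfin := h4 F hF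
  have : Pseudo I \ (Pseudo I \ ⋂₀ (F : Set (Set ℕ))) ⊆ ⋂₀ (F : Set (Set ℕ)) := by
    rintro x ⟨hx, h⟩
    by_contra hc
    exact h ⟨hx, hc⟩
  exact (hPinf.diff hfin).mono this
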